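/- Under the global differentiability hypotheses (F ∈ C¹ with L_{F_x} := sup ‖D_x F‖ and L_{F_z} := sup ‖D_z F‖ finite, and L_{F_x} · L_w < 1), the derivative of the global reservoir filter U^F at any input z ∈ ℓ^w_-(ℝⁿ) satisfies the operator-norm bound ‖D U^F(z)‖_{op,w} ≤ L_{F_z} / (1 − L_{F_x} L_w); consequently for each coordinate direction the partial derivative of the reservoir functional obeys ‖D_{z_t^i} H^F(z)‖ ≤ (L_{F_z}/(1 − L_{F_x}L_w)) · w_{-t}, a sequence decreasing to 0 as t → −∞ (differential uniform input forgetting property). -/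

import Mathlib

open Filter
open scoped ENNReal NNReal

/-- A weighting sequence: strictly decreasing, valued in `(0,1]`, with `w 0 = 1`
and zero limit. Sequences `z : ℤ₋ → ℝⁿ` are represented as `z : ℕ → (Fin n → ℝ)`,
where index `t : ℕ` stands for the time `-t`, so `w_{-t}` is `w t`. -/
def IsWeighting (w : ℕ → ℝ) : Prop :=
  StrictAnti w ∧ (∀ t, 0 < w t) ∧ (∀ t, w t ≤ 1) ∧ w 0 = 1 ∧
    Tendsto w atTop (nhds 0)


/-- Membership in the weighted space `ℓ^w_-`: finite weighted sup norm. -/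
def memLw {E : Type*} [NormedAddCommGroup E] (w : ℕ → ℝ) (z : ℕ → E) : Prop :=
  BddAbove (Set.range fun t => ‖z t‖ * w t)

/-- The weighted norm `‖z‖_w = sup_t ‖z_t‖ w_{-t}`. -/
noncomputable def wNorm {E : Type*} [NormedAddCommGroup E] (w : ℕ → ℝ) (z : ℕ → E) : ℝ :=
  ⨆ t, ‖z t‖ * w t

/-- Differential uniform input forgetting property. Let `F` be a `C¹` reservoir map
with uniformly bounded partial derivatives `‖D_x F‖ ≤ L_Fx`, `‖D_z F‖ ≤ L_Fz` and
`L_Fx · L_w < 1`. Let `U^F` be the reservoir filter (solving `x k = F (x (k+1)) (z k)`,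
with `k : ℕ` standing for time `-k`, and preserving `ℓ^w`), and let `DU z` be its
derivative at `z`, characterized by the differentiated reservoir recursion and
mapping `ℓ^w` to `ℓ^w`. Then `‖DU^F(z)‖_{op,w} ≤ L_Fz / (1 - L_Fx L_w)`, so each
partial derivative of the reservoir functional `H^F(z) = U^F(z)_0` in the direction
`e^{i,t}` is bounded by `(L_Fz / (1 - L_Fx L_w)) · w_{-t}`, a sequence tending to
zero as the time `-t` goes to `-∞`. -/
theorem differential_input_forgetting (n N : ℕ)
    (F : (Fin N → ℝ) → (Fin n → ℝ) → (Fin N → ℝ))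
    (hF : ContDiff ℝ 1 (fun p : (Fin N → ℝ) × (Fin n → ℝ) => F p.1 p.2))
    (LFx LFz : ℝ)
    (hLFx : ∀ x z, ‖fderiv ℝ (fun x' => F x' z) x‖ ≤ LFx)
    (hLFz : ∀ x z, ‖fderiv ℝ (fun z' => F x z') z‖ ≤ LFz)
    (w : ℕ → ℝ) (hw : IsWeighting w)
    (Lw : ℝ) (hLw : ∀ t, w t / w (t + 1) ≤ Lw) (hcond : LFx * Lw < 1)
    (UF : (ℕ → (Fin n → ℝ)) → (ℕ → (Fin N → ℝ)))
    (hUFmem : ∀ z, memLw w z → memLw w (UF z))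
    (hUFsol : ∀ z, memLw w z → ∀ k, UF z k = F (UF z (k + 1)) (z k))
    (DU : (ℕ → (Fin n → ℝ)) → (ℕ → (Fin n → ℝ)) → (ℕ → (Fin N → ℝ)))
    (hDUmem : ∀ z u, memLw w z → memLw w u → memLw w (DU z u))
    (hDUrec : ∀ z u, memLw w z → memLw w u → ∀ k,
      DU z u k
        = fderiv ℝ (fun x' => F x' (z k)) (UF z (k + 1)) (DU z u (k + 1))
          + fderiv ℝ (fun z' => F (UF z (k + 1)) z') (z k) (u k)) :
    (∀ z u, memLw w z → memLw w u →
      wNorm w (DU z u) ≤ (LFz / (1 - LFx * Lw)) * wNorm w u) ∧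
    (∀ z, memLw w z → ∀ t : ℕ, ∀ i : Fin n,
      ‖DU z (fun s => if s = t then Pi.single i 1 else 0) 0‖
        ≤ (LFz / (1 - LFx * Lw)) * w t) ∧
    Tendsto (fun t => (LFz / (1 - LFx * Lw)) * w t) atTop (nhds 0) := by
  obtain ⟨hanti, hpos, hle1, hw0, htend⟩ := hw
  have hLFz0 : 0 ≤ LFz := le_trans (norm_nonneg _) (hLFz 0 0)
  have hLFx0 : 0 ≤ LFx := le_trans (norm_nonneg _) (hLFx 0 0)
  have hLw0 : 0 ≤ Lw := le_trans (le_of_lt (div_pos (hpos 0) (hpos 1))) (hLw 0)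
  have hden : 0 < 1 - LFx * Lw := by linarith
  have hC0 : 0 ≤ LFz / (1 - LFx * Lw) := div_nonneg hLFz0 (le_of_lt hden)
  have main : ∀ z u, memLw w z → memLw w u →
      wNorm w (DU z u) ≤ (LFz / (1 - LFx * Lw)) * wNorm w u := by
    intro z u hz hu
    have hbdd : BddAbove (Set.range fun t => ‖DU z u t‖ * w t) := hDUmem z u hz hu
    have hbddu : BddAbove (Set.range fun t => ‖u t‖ * w t) := hu
    have hUnn : 0 ≤ wNorm w u :=
      le_trans (by positivity) (le_ciSup hbddu 0)
    have hkey : ∀ k, ‖DU z u k‖ * w k ≤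
        LFx * Lw * wNorm w (DU z u) + LFz * wNorm w u := by
      intro k
      have h1 : ‖DU z u k‖ ≤ LFx * ‖DU z u (k + 1)‖ + LFz * ‖u k‖ := by
        rw [hDUrec z u hz hu k]
        refine le_trans (norm_add_le _ _) (add_le_add ?_ ?_)
        · exact le_trans (ContinuousLinearMap.le_opNorm _ _)
            (mul_le_mul_of_nonneg_right (hLFx _ _) (norm_nonneg _))
        · exact le_trans (ContinuousLinearMap.le_opNorm _ _)
            (mul_le_mul_of_nonneg_right (hLFz _ _) (norm_nonneg _))
      have hwk : w k ≤ Lw * w (k + 1) := by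
        have := hLw k
        rw [div_le_iff₀ (hpos (k + 1))] at this
        linarith
      have h2 : ‖DU z u (k + 1)‖ * w (k + 1) ≤ wNorm w (DU z u) :=
        le_ciSup hbdd (k + 1)
      have h3 : ‖u k‖ * w k ≤ wNorm w u := le_ciSup hbddu k
      have hwknn : 0 ≤ w k := le_of_lt (hpos k)
      calc ‖DU z u k‖ * w k ≤ (LFx * ‖DU z u (k + 1)‖ + LFz * ‖u k‖) * w k :=
            mul_le_mul_of_nonneg_right h1 hwknn
        _ = LFx * (‖DU z u (k + 1)‖ * w k) + LFz * (‖u k‖ * w k) := by ring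
        _ ≤ LFx * (‖DU z u (k + 1)‖ * (Lw * w (k + 1))) + LFz * wNorm w u := by
            refine add_le_add (mul_le_mul_of_nonneg_left
              (mul_le_mul_of_nonneg_left hwk (norm_nonneg _)) hLFx0)
              (mul_le_mul_of_nonneg_left h3 hLFz0)
        _ = LFx * Lw * (‖DU z u (k + 1)‖ * w (k + 1)) + LFz * wNorm w u := by ring
        _ ≤ LFx * Lw * wNorm w (DU z u) + LFz * wNorm w u := by
            refine add_le_add_left (mul_le_mul_of_nonneg_left h2 ?_) _
            positivity
    have hS : wNorm w (DU z u) ≤ LFx * Lw * wNorm w (DU z u) + LFz * wNorm w u :=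
      ciSup_le hkey
    rw [div_mul_eq_mul_div, le_div_iff₀ hden]
    nlinarith [hS]
  refine ⟨main, ?_, ?_⟩
  · intro z hz t i
    set u : ℕ → (Fin n → ℝ) := fun s => if s = t then Pi.single i 1 else 0 with hu_def
    have hnsingle : ‖(Pi.single i 1 : Fin n → ℝ)‖ = 1 := by
      rw [Pi.norm_single]; simp
    have husw : ∀ s, ‖u s‖ * w s ≤ w t := by
      intro s
      by_cases hs : s = t
      · simp [hu_def, hs, hnsingle]
      · simp [hu_def, hs, le_of_lt (hpos t)]
    have hu : memLw w u := ⟨w t, by rintro x ⟨s, rfl⟩; exact husw s⟩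
    have huN : wNorm w u ≤ w t := ciSup_le husw
    have h0 : ‖DU z u 0‖ ≤ wNorm w (DU z u) := by
      have := le_ciSup (hDUmem z u hz hu) 0
      rwa [hw0, mul_one] at this
    calc ‖DU z u 0‖ ≤ wNorm w (DU z u) := h0
      _ ≤ (LFz / (1 - LFx * Lw)) * wNorm w u := main z u hz hu
      _ ≤ (LFz / (1 - LFx * Lw)) * w t := mul_le_mul_of_nonneg_left huN hC0
  · simpa using htend.const_mul (LFz / (1 - LFx * Lw))
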